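/- Let (A, B, E, E') be a C*-operator-valued infinitesimal probability space, let x = x* ∈ A, and set X = [[x, 0], [0, x]] ∈ Ã. Then there exists δ > 0 such that for all b, c ∈ B with ‖b‖ + ‖c‖ < δ, the elements I + ϑ_X([[b, c], [0, b]]) and 1 + ϑ_x(b) are invertible and κ_X([[b, c], [0, b]]) := (I + ϑ_X([[b, c], [0, b]]))⁻¹ ϑ_X([[b, c], [0, b]]) = [[κ_x(b), (Dκ_x)(b)(c) + ∂κ_x(b)], [0, κ_x(b)]], where Dκ_x is the Fréchet derivative of κ_x and ∂κ_x(b) = (1 + ϑ_x(b))⁻¹ ∂ϑ_x(b) (1 + ϑ_x(b))⁻¹. -/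

import Mathlib

open scoped BigOperators

variable {A B : Type*} [CStarAlgebra A] [CStarAlgebra B]

/-- `(A, B, E, E')` is a C*-operator-valued infinitesimal probability space, where the unital
C*-subalgebra `B ⊆ A` is realized via the isometric unital star-algebra embedding `ι : B → A`:
`E` is a bounded, completely positive, `B`-`B`-bimodule linear map with `E 1 = 1`, and `E'` is a
bounded, selfadjoint, `B`-`B`-bimodule linear map with `E' 1 = 0`. -/
structure IsCStarOVIProbSpace (ι : B →⋆ₐ[ℂ] A) (E E' : A →L[ℂ] B) : Prop where
  isometry : Isometry ι
  E_one : E 1 = 1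
  E_bimod : ∀ (b₁ b₂ : B) (a : A), E (ι b₁ * a * ι b₂) = b₁ * E a * b₂
  E_cp : ∀ (n : ℕ) (M : Matrix (Fin n) (Fin n) A),
      (∃ N : Matrix (Fin n) (Fin n) A, M = star N * N) →
      ∃ N' : Matrix (Fin n) (Fin n) B, M.map ⇑E = star N' * N'
  E'_one : E' 1 = 0
  E'_selfadj : ∀ a : A, E' (star a) = star (E' a)
  E'_bimod : ∀ (b₁ b₂ : B) (a : A), E' (ι b₁ * a * ι b₂) = b₁ * E' a * b₂

/-- `ϑ_z(b) = E((1 − bz)⁻¹ bz)`. -/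
noncomputable def thetaT (ι : B →⋆ₐ[ℂ] A) (E : A →L[ℂ] B) (z : A) (b : B) : B :=
  E (Ring.inverse (1 - ι b * z) * (ι b * z))

/-- The κ-transform `κ_z(b) = (1 + ϑ_z(b))⁻¹ ϑ_z(b)`. -/
noncomputable def kappaT (ι : B →⋆ₐ[ℂ] A) (E : A →L[ℂ] B) (z : A) (b : B) : B :=
  Ring.inverse (1 + thetaT ι E z b) * thetaT ι E z b

/-- `∂ϑ_z(b) = E'((1 − bz)⁻¹ bz)`. -/
noncomputable def dthetaT (ι : B →⋆ₐ[ℂ] A) (E' : A →L[ℂ] B) (z : A) (b : B) : B :=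
  E' (Ring.inverse (1 - ι b * z) * (ι b * z))

/-- The infinitesimal κ-transform `∂κ_z(b) = (1 + ϑ_z(b))⁻¹ ∂ϑ_z(b) (1 + ϑ_z(b))⁻¹`. -/
noncomputable def dkappaT (ι : B →⋆ₐ[ℂ] A) (E E' : A →L[ℂ] B) (z : A) (b : B) : B :=
  Ring.inverse (1 + thetaT ι E z b) * dthetaT ι E' z b * Ring.inverse (1 + thetaT ι E z b)

open TrivSqZeroExt

/-- The map `Ẽ : Ã → B̃`, `[[a, a'], [0, a]] ↦ [[E a, E' a + E a'], [0, E a]]`, where the upper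
triangular algebra `Ã` (of matrices `[[a, a'], [0, a]]`) is realized as the trivial square-zero
extension `TrivSqZeroExt A A`. -/
noncomputable def tildeE (E E' : A →L[ℂ] B) (p : TrivSqZeroExt A A) : TrivSqZeroExt B B :=
  inl (E p.fst) + inr (E' p.fst + E p.snd)

/-- The embedding of `B̃` into `Ã` induced by `ι`. -/
noncomputable def tildeIota (ι : B →⋆ₐ[ℂ] A) (p : TrivSqZeroExt B B) : TrivSqZeroExt A A :=
  inl (ι p.fst) + inr (ι p.snd)

section myHelpers
variable {R : Type*} [Ring R]

lemma myRing.inverse_eq {p q : R} (h1 : p * q = 1) (h2 : q * p = 1) : Ring.inverse p = q :=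
  Ring.inverse_unit ⟨p, q, h1, h2⟩

lemma myInv_comm {w : R} (hw : IsUnit (1 - w)) :
    Ring.inverse (1 - w) * w = w * Ring.inverse (1 - w) := by
  have h1 := Ring.inverse_mul_cancel _ hw
  have h2 := Ring.mul_inverse_cancel _ hw
  rw [mul_sub, mul_one] at h1
  rw [sub_mul, one_mul] at h2
  exact sub_right_injective (h1.trans h2.symm)

lemma myResolvent {w : R} (hw : IsUnit (1 - w)) :
    Ring.inverse (1 - w) = 1 + Ring.inverse (1 - w) * w := by
  have h1 := Ring.inverse_mul_cancel _ hw
  rw [mul_sub, mul_one, sub_eq_iff_eq_add] at h1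
  exact h1

lemma myResolvent' {w : R} (hw : IsUnit (1 - w)) :
    Ring.inverse (1 - w) * w = Ring.inverse (1 - w) - 1 := by
  rw [eq_sub_iff_add_eq, add_comm, ← myResolvent hw]

lemma myKappaEq {t : R} (ht : IsUnit (1 + t)) :
    Ring.inverse (1 + t) * t = 1 - Ring.inverse (1 + t) := by
  have h1 := Ring.inverse_mul_cancel _ ht
  rw [mul_add, mul_one] at h1
  rw [eq_sub_iff_add_eq, add_comm, h1]

lemma mySndAux {R : Type*} [Ring R] {w : R} (hw : IsUnit (1 - w)) (v : R) :
    Ring.inverse (1 - w) * v + Ring.inverse (1 - w) * v * (Ring.inverse (1 - w) * w)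
      = Ring.inverse (1 - w) * v * Ring.inverse (1 - w) := by
  nth_rewrite 5 [myResolvent hw]
  rw [mul_add, mul_one]

lemma tsze_inverse (p : TrivSqZeroExt R R) (hu : IsUnit p.fst) :
    Ring.inverse p =
      inl (Ring.inverse p.fst) + inr (-(Ring.inverse p.fst * p.snd * Ring.inverse p.fst)) := by
  apply myRing.inverse_eq <;>
  · apply TrivSqZeroExt.ext <;>
      simp [fst_mul, snd_mul, smul_eq_mul, op_smul_eq_mul,
        Ring.mul_inverse_cancel _ hu, Ring.inverse_mul_cancel _ hu, mul_sub, sub_mul,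
        Ring.inverse_mul_cancel_right _ _ hu, Ring.mul_inverse_cancel_right _ _ hu,
        Ring.inverse_mul_cancel_left _ _ hu, Ring.mul_inverse_cancel_left _ _ hu,
        ← mul_assoc]

lemma myNormBound {R : Type*} [NormedRing R] [CompleteSpace R]
    {w : R} (hw : ‖w‖ ≤ 1/2) :
    IsUnit (1 - w) ∧ ‖Ring.inverse (1 - w) * w‖ ≤ 2 * ‖w‖ := by
  have hlt : ‖w‖ < 1 := lt_of_le_of_lt hw (by norm_num)
  have hu : IsUnit (1 - w) := (Units.oneSub w hlt).isUnit
  refine ⟨hu, ?_⟩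
  have hveq : Ring.inverse (1 - w) * w = w + w * (Ring.inverse (1 - w) * w) := by
    rw [myInv_comm hu]
    conv_lhs => rw [myResolvent hu]
    rw [mul_add, mul_one, myInv_comm hu]
  have hn : ‖Ring.inverse (1 - w) * w‖ ≤ ‖w‖ + ‖w‖ * ‖Ring.inverse (1 - w) * w‖ := by
    calc ‖Ring.inverse (1 - w) * w‖ = ‖w + w * (Ring.inverse (1 - w) * w)‖ := by rw [← hveq]
    _ ≤ ‖w‖ + ‖w * (Ring.inverse (1 - w) * w)‖ := norm_add_le _ _
    _ ≤ ‖w‖ + ‖w‖ * ‖Ring.inverse (1 - w) * w‖ := by gcongr; exact norm_mul_le _ _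
  nlinarith [norm_nonneg (Ring.inverse (1 - w) * w), norm_nonneg w]

end myHelpers

/-- The embedding `ι` as a continuous linear map. -/
noncomputable def iotaL (ι : B →⋆ₐ[ℂ] A) (hiso : Isometry ι) : B →L[ℂ] A :=
  ⟨ι.toAlgHom.toLinearMap, hiso.continuous⟩

lemma scalar_units (ι : B →⋆ₐ[ℂ] A) (E : A →L[ℂ] B) (hiso : Isometry ι) (x : A) :
    ∀ b : B, ‖b‖ < (2 * (‖E‖ + 1) * (‖x‖ + 1))⁻¹ →
      IsUnit (1 - ι b * x) ∧ IsUnit (1 + thetaT ι E x b) := by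
  set δ : ℝ := (2 * (‖E‖ + 1) * (‖x‖ + 1))⁻¹ with hδ
  have hEpos : (0:ℝ) < ‖E‖ + 1 := by positivity
  have hxpos : (0:ℝ) < ‖x‖ + 1 := by positivity
  intro b hb
  have hbx : ‖ι b * x‖ ≤ ‖b‖ * ‖x‖ := by
    calc ‖ι b * x‖ ≤ ‖ι b‖ * ‖x‖ := norm_mul_le _ _
    _ = ‖b‖ * ‖x‖ := by rw [hiso.norm_map_of_map_zero (map_zero ι)]
  have key : ‖b‖ * ‖x‖ < (2 * (‖E‖ + 1))⁻¹ := by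
    have h1 : ‖b‖ * ‖x‖ ≤ ‖b‖ * (‖x‖ + 1) := by nlinarith [norm_nonneg b]
    have h2 : ‖b‖ * (‖x‖ + 1) < δ * (‖x‖ + 1) := by gcongr
    have h3 : δ * (‖x‖ + 1) = (2 * (‖E‖ + 1))⁻¹ := by
      rw [hδ]; field_simp
    linarith
  have hhalf : ‖ι b * x‖ ≤ 1/2 := by
    have : (2 * (‖E‖ + 1))⁻¹ ≤ 1/2 := by
      rw [inv_le_comm₀ (by positivity) (by norm_num)]
      nlinarith [norm_nonneg E]
    linarith
  obtain ⟨hu, hbd⟩ := myNormBound hhalf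
  refine ⟨hu, ?_⟩
  have hθ : ‖thetaT ι E x b‖ < 1 := by
    have h1 : ‖thetaT ι E x b‖ ≤ ‖E‖ * ‖Ring.inverse (1 - ι b * x) * (ι b * x)‖ :=
      E.le_opNorm _
    have h3 : (‖E‖+1) * (2 * (‖b‖ * ‖x‖)) < (‖E‖+1) * (2 * (2 * (‖E‖ + 1))⁻¹) := by
      gcongr
    have h4 : (‖E‖+1) * (2 * (2 * (‖E‖ + 1))⁻¹) = 1 := by field_simp
    nlinarith [mul_le_mul_of_nonneg_left hbd (norm_nonneg E),
      norm_nonneg (ι b * x), norm_nonneg E]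
  have h5 : IsUnit (1 - (-(thetaT ι E x b))) :=
    (Units.oneSub _ (by rwa [norm_neg])).isUnit
  rwa [sub_neg_eq_add] at h5

lemma kappa_deriv (ι : B →⋆ₐ[ℂ] A) (E : A →L[ℂ] B) (hiso : Isometry ι) (hE1 : E 1 = 1)
    (x : A) {δ : ℝ}
    (hU : ∀ b : B, ‖b‖ < δ → IsUnit (1 - ι b * x) ∧ IsUnit (1 + thetaT ι E x b))
    (b : B) (hb : ‖b‖ < δ) :
    DifferentiableAt ℂ (kappaT ι E x) b ∧
      ∀ c, fderiv ℂ (kappaT ι E x) b c =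
        Ring.inverse (1 + thetaT ι E x b) *
          E (Ring.inverse (1 - ι b * x) * (ι c * x) * Ring.inverse (1 - ι b * x)) *
          Ring.inverse (1 + thetaT ι E x b) := by
  obtain ⟨hu, hθ⟩ := hU b hb
  set r := Ring.inverse (1 - ι b * x) with hr
  set q := Ring.inverse (1 + thetaT ι E x b) with hq
  set L : B →L[ℂ] A := ((ContinuousLinearMap.mul ℂ A).flip x).comp (iotaL ι hiso) with hL
  have hLa : ∀ c, L c = ι c * x := fun c => rfl
  have step1 : HasFDerivAt (fun b' : B => 1 - ι b' * x) (-L) b := by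
    have := (L.hasFDerivAt (x := b)).const_sub 1
    exact this
  have hball : Metric.ball (0 : B) δ ∈ nhds b :=
    Metric.isOpen_ball.mem_nhds (by simpa [Metric.mem_ball, dist_zero_right] using hb)
  have hu' : (↑hu.unit⁻¹ : A) = r := by
    have h := Ring.inverse_unit hu.unit
    rw [hu.unit_spec] at h
    exact h.symm
  have step2 : HasFDerivAt (fun b' : B => Ring.inverse (1 - ι b' * x))
      ((-(ContinuousLinearMap.mulLeftRight ℂ A r r)).comp (-L)) b := by
    have hinv := hasFDerivAt_ringInverse (𝕜 := ℂ) hu.unit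
    rw [hu', hu.unit_spec] at hinv
    exact hinv.comp b step1
  have step3 : HasFDerivAt (fun b' : B => E (Ring.inverse (1 - ι b' * x)) - 1)
      (E.comp ((-(ContinuousLinearMap.mulLeftRight ℂ A r r)).comp (-L))) b :=
    (E.hasFDerivAt.comp b step2).sub_const 1
  have hev : thetaT ι E x =ᶠ[nhds b] fun b' => E (Ring.inverse (1 - ι b' * x)) - 1 := by
    filter_upwards [hball] with b' hb'
    have hub' := (hU b' (by simpa [Metric.mem_ball, dist_zero_right] using hb')).1
    rw [thetaT, myResolvent' hub', map_sub, hE1]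
  set D := E.comp ((-(ContinuousLinearMap.mulLeftRight ℂ A r r)).comp (-L)) with hD
  have stepθ : HasFDerivAt (thetaT ι E x) D b := step3.congr_of_eventuallyEq hev
  have hθ' : (↑hθ.unit⁻¹ : B) = q := by
    have h := Ring.inverse_unit hθ.unit
    rw [hθ.unit_spec] at h
    exact h.symm
  have step6 : HasFDerivAt (fun b' : B => Ring.inverse (1 + thetaT ι E x b'))
      ((-(ContinuousLinearMap.mulLeftRight ℂ B q q)).comp D) b := by
    have hinv := hasFDerivAt_ringInverse (𝕜 := ℂ) hθ.unit
    rw [hθ', hθ.unit_spec] at hinv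
    exact hinv.comp b (stepθ.const_add 1)
  have step7 : HasFDerivAt (fun b' : B => 1 - Ring.inverse (1 + thetaT ι E x b'))
      (-((-(ContinuousLinearMap.mulLeftRight ℂ B q q)).comp D)) b :=
    step6.const_sub 1
  have hev2 : kappaT ι E x =ᶠ[nhds b] fun b' => 1 - Ring.inverse (1 + thetaT ι E x b') := by
    filter_upwards [hball] with b' hb'
    have hub' := (hU b' (by simpa [Metric.mem_ball, dist_zero_right] using hb')).2
    rw [kappaT, myKappaEq hub']
  have final : HasFDerivAt (kappaT ι E x)
      (-((-(ContinuousLinearMap.mulLeftRight ℂ B q q)).comp D)) b :=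
    step7.congr_of_eventuallyEq hev2
  refine ⟨final.differentiableAt, fun c => ?_⟩
  rw [final.fderiv]
  simp [hD, ContinuousLinearMap.comp_apply, ContinuousLinearMap.neg_apply,
    ContinuousLinearMap.mulLeftRight_apply, hLa, mul_neg, neg_mul, neg_neg, iotaL]

/-- For a C*-operator-valued infinitesimal probability space `(A, B, E, E')`, a selfadjoint
`x ∈ A` and `X = [[x, 0], [0, x]]`, there is `δ > 0` such that for all `b, c ∈ B` with
`‖b‖ + ‖c‖ < δ` the elements `I + ϑ_X([[b, c], [0, b]])` and `1 + ϑ_x(b)` are invertible and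
`κ_X([[b, c], [0, b]]) = [[κ_x(b), (Dκ_x)(b)(c) + ∂κ_x(b)], [0, κ_x(b)]]`. -/
theorem kappa_upper_triangular
    (ι : B →⋆ₐ[ℂ] A) (E E' : A →L[ℂ] B) (h : IsCStarOVIProbSpace ι E E')
    (x : A) (hx : star x = x) :
    ∃ δ > (0 : ℝ), ∀ b c : B, ‖b‖ + ‖c‖ < δ →
      IsUnit (1 - tildeIota ι (inl b + inr c) * inl x) ∧
      IsUnit (1 + tildeE E E' (Ring.inverse (1 - tildeIota ι (inl b + inr c) * inl x) *
          (tildeIota ι (inl b + inr c) * inl x))) ∧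
      IsUnit (1 + thetaT ι E x b) ∧
      DifferentiableAt ℂ (kappaT ι E x) b ∧
      Ring.inverse (1 + tildeE E E' (Ring.inverse (1 - tildeIota ι (inl b + inr c) * inl x) *
            (tildeIota ι (inl b + inr c) * inl x))) *
          tildeE E E' (Ring.inverse (1 - tildeIota ι (inl b + inr c) * inl x) *
            (tildeIota ι (inl b + inr c) * inl x)) =
        inl (kappaT ι E x b) + inr (fderiv ℂ (kappaT ι E x) b c + dkappaT ι E E' x b) := by
  set δ : ℝ := (2 * (‖E‖ + 1) * (‖x‖ + 1))⁻¹ with hδ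
  have hδpos : 0 < δ := by positivity
  have hU := scalar_units ι E h.isometry x
  refine ⟨δ, hδpos, fun b c hbc => ?_⟩
  have hb : ‖b‖ < δ := lt_of_le_of_lt (le_add_of_nonneg_right (norm_nonneg c)) hbc
  obtain ⟨hu, hθ⟩ := hU b hb
  obtain ⟨hdiff, hfor⟩ := kappa_deriv ι E h.isometry h.E_one x hU b hb
  set W := tildeIota ι (inl b + inr c) * (inl x : TrivSqZeroExt A A) with hW
  set r := Ring.inverse (1 - ι b * x) with hr
  set q := Ring.inverse (1 + thetaT ι E x b) with hq
  have hWf : W.fst = ι b * x := by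
    simp [hW, tildeIota, fst_mul]
  have hWs : W.snd = ι c * x := by
    simp [hW, tildeIota, snd_mul, smul_eq_mul, op_smul_eq_mul]
  have h1f : (1 - W).fst = 1 - ι b * x := by rw [fst_sub, fst_one, hWf]
  have h1s : (1 - W).snd = -(ι c * x) := by rw [snd_sub, snd_one, hWs, zero_sub]
  have hunit1 : IsUnit (1 - W) := by
    rw [isUnit_iff_isUnit_fst, h1f]; exact hu
  refine ⟨hunit1, ?_⟩
  have hRinv : Ring.inverse (1 - W) = inl r + inr (r * (ι c * x) * r) := by
    rw [tsze_inverse _ (by rw [h1f]; exact hu), h1f, h1s]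
    congr 1
    rw [mul_neg, neg_mul, neg_neg]
  set P := Ring.inverse (1 - W) * W with hP
  have hPf : P.fst = r * (ι b * x) := by
    rw [hP, fst_mul, hRinv, hWf]
    simp
  have hPs : P.snd = r * (ι c * x) * r := by
    rw [hP, snd_mul, hRinv, hWf, hWs]
    simp only [fst_add, fst_inl, fst_inr, add_zero, snd_add, snd_inl, snd_inr, zero_add,
      smul_eq_mul, op_smul_eq_mul]
    rw [mul_assoc (r * (ι c * x)) r (ι b * x)]
    exact mySndAux hu (ι c * x)
  have hEP : tildeE E E' P = inl (thetaT ι E x b) +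
      inr (dthetaT ι E' x b + E (r * (ι c * x) * r)) := by
    rw [tildeE, hPf, hPs]
    rfl
  have hfst2 : (1 + tildeE E E' P).fst = 1 + thetaT ι E x b := by
    rw [fst_add, fst_one, hEP, fst_add, fst_inl, fst_inr, add_zero]
  have hsnd2 : (1 + tildeE E E' P).snd = dthetaT ι E' x b + E (r * (ι c * x) * r) := by
    rw [snd_add, snd_one, hEP, snd_add, snd_inl, snd_inr, zero_add, zero_add]
  have hunit2 : IsUnit (1 + tildeE E E' P) := by
    rw [isUnit_iff_isUnit_fst, hfst2]; exact hθ
  refine ⟨hunit2, hθ, hdiff, ?_⟩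
  set s := dthetaT ι E' x b + E (r * (ι c * x) * r) with hs
  have hQ : Ring.inverse (1 + tildeE E E' P) = inl q + inr (-(q * s * q)) := by
    rw [tsze_inverse _ (by rw [hfst2]; exact hθ), hfst2, hsnd2]
  rw [hQ, hEP]
  apply TrivSqZeroExt.ext
  · rw [fst_mul]
    simp only [fst_add, fst_inl, fst_inr, add_zero]
    rw [kappaT, ← hq]
  · rw [snd_mul]
    simp only [fst_add, fst_inl, fst_inr, add_zero, snd_add, snd_inl, snd_inr, zero_add,
      smul_eq_mul, op_smul_eq_mul]
    have hqθ : q * thetaT ι E x b = 1 - q := myKappaEq hθ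
    have e1 : q * s + -(q * s * q) * thetaT ι E x b = q * s * q := by
      rw [neg_mul, mul_assoc (q * s) q _, hqθ, mul_sub, mul_one]
      abel
    have hdk : dkappaT ι E E' x b = q * dthetaT ι E' x b * q := by
      rw [dkappaT, ← hq]
    have e2 : q * s * q = fderiv ℂ (kappaT ι E x) b c + dkappaT ι E E' x b := by
      rw [hs, mul_add, add_mul, hfor c, hdk, add_comm]
    rw [e1, e2]
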